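/- Let X be a Banach space not containing an isomorphic copy of ℓ₁. Then every bounded sequence (x*_n) in X* satisfies ca((x*_n)) ≤ 3·ca_{ρ*}((x*_n)). -/

import Mathlib

open Filter Metric Topology Pointwise NormedSpace

set_option maxHeartbeats 1000000
set_option synthInstance.maxHeartbeats 400000

noncomputable section

/-- `ca (x_k) = inf_n diam {x_k : k ≥ n}`: measures how far `(x_k)` is from being norm Cauchy. -/
def ca {Z : Type*} [NormedAddCommGroup Z] (x : ℕ → Z) : ℝ :=
  ⨅ n : ℕ, Metric.diam (x '' Set.Ici n)

/-- `δ (x_k) = sup_{f ∈ B_{Z*}} inf_n diam {f (x_k) : k ≥ n}`: measures how far `(x_k)` is from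
being weakly Cauchy. -/
def qdelta {Z : Type*} [NormedAddCommGroup Z] [NormedSpace ℝ Z] (x : ℕ → Z) : ℝ :=
  ⨆ f : Metric.closedBall (0 : StrongDual ℝ Z) 1,
    ⨅ n : ℕ, Metric.diam ((fun k => (f : StrongDual ℝ Z) (x k)) '' Set.Ici n)

/-- `ca_{ρ*} (x*_n)`: measures how far the sequence `(x*_n)` in `X*` is from being Cauchy in the
Mackey topology of `X*`; the outer supremum runs over all weakly compact subsets `K` of the
closed unit ball of `X`. -/
def caRhoStar {Z : Type*} [NormedAddCommGroup Z] [NormedSpace ℝ Z]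
    (φ : ℕ → StrongDual ℝ Z) : ℝ :=
  sSup { r : ℝ | ∃ K : Set Z,
    K ⊆ Metric.closedBall 0 1 ∧
    IsCompact (show Set (WeakSpace ℝ Z) from K) ∧
    r = ⨅ n : ℕ, ⨆ j : Set.Ici n, ⨆ l : Set.Ici n, ⨆ v : K, |(φ j - φ l) (v : Z)| }

namespace NoL1

/-- `t` is an initial segment of the set `P`. -/
def IsInit (t : Finset ℕ) (P : Set ℕ) : Prop :=
  ↑t ⊆ P ∧ ∀ x ∈ P, x ∉ t → ∀ y ∈ t, y < x

/-- Every infinite subset of `M` lying above `s` has an initial segment `t` with `s ∪ t ∈ F`. -/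
def Acce (F : Set (Finset ℕ)) (M : Set ℕ) (s : Finset ℕ) : Prop :=
  ∀ P : Set ℕ, P ⊆ M → P.Infinite → (∀ x ∈ P, ∀ y ∈ s, y < x) →
    ∃ t : Finset ℕ, IsInit t P ∧ s ∪ t ∈ F

def Rej (F : Set (Finset ℕ)) (M : Set ℕ) (s : Finset ℕ) : Prop :=
  ∀ N : Set ℕ, N ⊆ M → N.Infinite → ¬ Acce F N s

lemma Acce.mono {F M N s} (h : Acce F M s) (hNM : N ⊆ M) : Acce F N s :=
  fun P hP => h P (hP.trans hNM)

lemma Rej.mono {F M N s} (h : Rej F M s) (hNM : N ⊆ M) : Rej F N s :=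
  fun Q hQ => h Q (hQ.trans hNM)

lemma acce_of_mem {F : Set (Finset ℕ)} {s : Finset ℕ} (hs : s ∈ F) (M : Set ℕ) :
    Acce F M s := by
  intro P _ _ _
  exact ⟨∅, ⟨by simp, by simp⟩, by simpa using hs⟩

lemma not_rej_of_mem {F : Set (Finset ℕ)} {s : Finset ℕ} (hs : s ∈ F) {M : Set ℕ}
    (hM : M.Infinite) : ¬ Rej F M s := fun h => h M subset_rfl hM (acce_of_mem hs M)

open scoped Classical in
private def stepA (F : Set (Finset ℕ)) (s : Finset ℕ) (A : Set ℕ) : Set ℕ :=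
  if h : ∃ N, N ⊆ A \ Set.Iic (sInf A) ∧ N.Infinite ∧ Acce F N (insert (sInf A) s)
  then h.choose else A \ Set.Iic (sInf A)

private lemma stepA_subset (F : Set (Finset ℕ)) (s : Finset ℕ) (A : Set ℕ) :
    stepA F s A ⊆ A \ Set.Iic (sInf A) := by
  unfold stepA
  split_ifs with h
  · exact h.choose_spec.1
  · exact subset_rfl

private lemma stepA_infinite (F : Set (Finset ℕ)) (s : Finset ℕ) {A : Set ℕ}
    (hA : A.Infinite) : (stepA F s A).Infinite := by
  unfold stepA
  split_ifs with h
  · exact h.choose_spec.2.1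
  · exact hA.diff (Set.finite_Iic _)

private lemma stepA_spec (F : Set (Finset ℕ)) (s : Finset ℕ) (A : Set ℕ) :
    Acce F (stepA F s A) (insert (sInf A) s) ∨ Rej F (stepA F s A) (insert (sInf A) s) := by
  unfold stepA
  split_ifs with h
  · exact Or.inl h.choose_spec.2.2
  · refine Or.inr fun Q hQ hQinf hacc => h ⟨Q, hQ, hQinf, hacc⟩

/-- Claim A: if `M` rejects `s`, there is an infinite `N ⊆ M` above `s`
rejecting `insert n s` for each of its elements `n`. -/
lemma exists_strong {F : Set (Finset ℕ)} {M : Set ℕ} (hM : M.Infinite) {s : Finset ℕ}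
    (hrej : Rej F M s) :
    ∃ N, N ⊆ M ∧ N.Infinite ∧ (∀ x ∈ N, ∀ y ∈ s, y < x) ∧
      ∀ n ∈ N, Rej F N (insert n s) := by
  classical
  -- the starting set: M above s
  set M₀ : Set ℕ := M \ {x | ∃ y ∈ s, x ≤ y} with hM₀def
  have hM₀fin : {x : ℕ | ∃ y ∈ s, x ≤ y}.Finite := by
    apply Set.Finite.subset (Set.finite_Iic (s.sup id))
    rintro x ⟨y, hy, hxy⟩
    exact Set.mem_Iic.2 (hxy.trans (Finset.le_sup (f := id) hy))
  have hM₀ : M₀.Infinite := hM.diff hM₀fin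
  have hM₀M : M₀ ⊆ M := Set.diff_subset
  have hM₀above : ∀ x ∈ M₀, ∀ y ∈ s, y < x := by
    rintro x ⟨_, hx⟩ y hy
    by_contra h
    exact hx ⟨y, hy, not_lt.1 h⟩
  -- the recursive sequence of sets
  set g : ℕ → Set ℕ := fun i => (stepA F s)^[i] M₀ with hgdef
  have hgsucc : ∀ i, g (i + 1) = stepA F s (g i) := by
    intro i; simp [hgdef, Function.iterate_succ_apply']
  have hginf : ∀ i, (g i).Infinite := by
    intro i; induction i with
    | zero => exact hM₀
    | succ i ih => rw [hgsucc]; exact stepA_infinite F s ih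
  set n : ℕ → ℕ := fun i => sInf (g i) with hndef
  have hmemn : ∀ i, n i ∈ g i := fun i => Nat.sInf_mem (hginf i).nonempty
  have hsub : ∀ i, g (i + 1) ⊆ g i \ Set.Iic (n i) := by
    intro i; rw [hgsucc]; exact stepA_subset F s (g i)
  have hmono : ∀ i j, i ≤ j → g j ⊆ g i := by
    intro i j hij
    induction j with
    | zero => simpa [Nat.le_zero.1 hij]
    | succ j ih =>
      rcases Nat.lt_or_ge i (j+1) with h | h
      · exact ((hsub j).trans Set.diff_subset).trans (ih (Nat.lt_succ_iff.1 h))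
      · have : i = j + 1 := le_antisymm hij h
        simp [this]
  have hgM : ∀ i, g i ⊆ M := fun i => (hmono 0 i (Nat.zero_le i)).trans hM₀M
  have hnlt : ∀ i j, i < j → n i < n j := by
    intro i j hij
    have : n j ∈ g (i+1) := hmono (i+1) j hij (hmemn j)
    have := hsub i this
    simpa using this.2
  have hninj : Function.Injective n := (strictMono_nat_of_lt_succ
    (fun i => hnlt i (i+1) (Nat.lt_succ_self i))).injective
  have hspec : ∀ i, Acce F (g (i+1)) (insert (n i) s) ∨ Rej F (g (i+1)) (insert (n i) s) := by
    intro i; rw [hgsucc]; exact stepA_spec F s (g i)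
  -- key: elements of the range beyond n i lie in g (i+1)
  have hkey : ∀ i (x : ℕ), x ∈ Set.range n → n i < x → x ∈ g (i + 1) := by
    rintro i x ⟨j, rfl⟩ hlt
    have hij : i < j := by
      by_contra h
      have := hnlt j i (lt_of_le_of_ne (not_lt.1 h) ?_)
      · omega
      · rintro rfl; omega
    exact hmono (i+1) j hij (hmemn j)
  by_cases hbad : {i | Acce F (g (i+1)) (insert (n i) s)}.Infinite
  · -- accepting indices infinite: contradiction with hrej
    exfalso
    set Na : Set ℕ := n '' {i | Acce F (g (i+1)) (insert (n i) s)} with hNa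
    have hNaInf : Na.Infinite := hbad.image (Set.injOn_of_injective hninj)
    have hNaM : Na ⊆ M := by rintro x ⟨i, _, rfl⟩; exact hgM i (hmemn i)
    refine hrej Na hNaM hNaInf ?_
    intro P hP hPinf hPab
    obtain ⟨i, hiacc, hmin⟩ : ∃ i, Acce F (g (i+1)) (insert (n i) s) ∧ sInf P = n i := by
      have := hP (Nat.sInf_mem hPinf.nonempty)
      rcases this with ⟨i, hi, h⟩
      exact ⟨i, hi, h.symm⟩
    set P' : Set ℕ := P \ Set.Iic (n i) with hP'
    have hP'P : P' ⊆ P := Set.diff_subset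
    have hP'inf : P'.Infinite := hPinf.diff (Set.finite_Iic _)
    have hP'sub : P' ⊆ g (i + 1) := by
      rintro x ⟨hxP, hxgt⟩
      refine hkey i x ?_ (by simpa using hxgt)
      rcases hP hxP with ⟨j, _, rfl⟩
      exact ⟨j, rfl⟩
    have hP'ab : ∀ x ∈ P', ∀ y ∈ insert (n i) s, y < x := by
      rintro x ⟨hxP, hxgt⟩ y hy
      rcases Finset.mem_insert.1 hy with rfl | hy
      · simpa using hxgt
      · exact hPab x hxP y hy
    obtain ⟨t, ⟨htP, htinit⟩, htF⟩ := hiacc P' hP'sub hP'inf hP'ab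
    refine ⟨insert (n i) t, ⟨?_, ?_⟩, ?_⟩
    · intro x hx
      rcases Finset.mem_insert.1 (by exact_mod_cast hx) with rfl | hx
      · rw [← hmin]; exact Nat.sInf_mem hPinf.nonempty
      · exact hP'P (htP hx)
    · intro x hxP hxt y hyt
      rcases Finset.mem_insert.1 hyt with rfl | hy
      · have hnix : n i ≤ x := by rw [← hmin]; exact Nat.sInf_le hxP
        rcases lt_or_eq_of_le hnix with h | h
        · exact h
        · exfalso; exact hxt (by rw [← h]; exact Finset.mem_insert_self _ _)
      · have hxP' : x ∈ P' := by
          refine ⟨hxP, ?_⟩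
          simp only [Set.mem_Iic]
          intro hle
          have hnix : n i ≤ x := by rw [← hmin]; exact Nat.sInf_le hxP
          rcases lt_or_eq_of_le hnix with h | h
          · omega
          · exact hxt (by rw [← h]; exact Finset.mem_insert_self _ _)
        exact htinit x hxP' (fun hc => hxt (Finset.mem_insert_of_mem hc)) y hy
    · rw [Finset.union_insert, ← Finset.insert_union]; exact htF
  · -- rejecting tail
    rw [Set.not_infinite] at hbad
    obtain ⟨i₀, hi₀⟩ : ∃ i₀, ∀ i, i₀ ≤ i → Rej F (g (i+1)) (insert (n i) s) := by
      rcases Set.Finite.bddAbove hbad with ⟨b, hb⟩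
      refine ⟨b + 1, fun i hi => ?_⟩
      rcases hspec i with h | h
      · exact absurd (hb h) (by omega)
      · exact h
    set N : Set ℕ := n '' Set.Ici i₀ with hN
    have hNM : N ⊆ M := by rintro x ⟨i, _, rfl⟩; exact hgM i (hmemn i)
    have hNinf : N.Infinite := (Set.Ici_infinite i₀).image (Set.injOn_of_injective hninj)
    refine ⟨N, hNM, hNinf, ?_, ?_⟩
    · rintro x ⟨i, _, rfl⟩ y hy
      exact hM₀above _ (hmono 0 i (Nat.zero_le i) (hmemn i)) y hy
    · rintro x ⟨i, hii₀, rfl⟩ Q hQ hQinf haccQ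
      set Q' : Set ℕ := Q \ Set.Iic (n i) with hQ'
      have hQ'inf : Q'.Infinite := hQinf.diff (Set.finite_Iic _)
      have hQ'sub : Q' ⊆ g (i+1) := by
        rintro x ⟨hxQ, hxgt⟩
        refine hkey i x ?_ (by simpa using hxgt)
        rcases hQ hxQ with ⟨j, _, rfl⟩; exact ⟨j, rfl⟩
      exact hi₀ i hii₀ Q' hQ'sub hQ'inf (haccQ.mono Set.diff_subset)

lemma exists_strong_finset {F : Set (Finset ℕ)} (S : Finset (Finset ℕ)) :
    ∀ M : Set ℕ, M.Infinite → (∀ s ∈ S, Rej F M s) →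
    ∃ N, N ⊆ M ∧ N.Infinite ∧
      ∀ s ∈ S, (∀ x ∈ N, ∀ y ∈ s, y < x) ∧ ∀ n ∈ N, Rej F N (insert n s) := by
  classical
  induction S using Finset.induction_on with
  | empty => intro M hM _; exact ⟨M, subset_rfl, hM, by simp⟩
  | @insert s S hsS ih =>
    intro M hM h
    obtain ⟨N₁, hN₁M, hN₁inf, hN₁⟩ := ih M hM (fun s' hs' => h s' (Finset.mem_insert_of_mem hs'))
    obtain ⟨N₂, hN₂N₁, hN₂inf, hN₂ab, hN₂rej⟩ :=
      exists_strong hN₁inf ((h s (Finset.mem_insert_self s S)).mono hN₁M)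
    refine ⟨N₂, hN₂N₁.trans hN₁M, hN₂inf, ?_⟩
    intro s' hs'
    rcases Finset.mem_insert.1 hs' with rfl | hs'
    · exact ⟨hN₂ab, hN₂rej⟩
    · obtain ⟨hab, hrej⟩ := hN₁ s' hs'
      exact ⟨fun x hx => hab x (hN₂N₁ hx), fun n hn => (hrej n (hN₂N₁ hn)).mono hN₂N₁⟩

open scoped Classical in
private def stepB (F : Set (Finset ℕ)) (pa : Finset ℕ × Set ℕ) : Finset ℕ × Set ℕ :=
  if h : ∃ N, N ⊆ pa.2 ∧ N.Infinite ∧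
      ∀ s ∈ pa.1.powerset, (∀ x ∈ N, ∀ y ∈ s, y < x) ∧ ∀ n ∈ N, Rej F N (insert n s)
  then (insert (sInf h.choose) pa.1, h.choose \ Set.Iic (sInf h.choose))
  else pa

private lemma stepB_spec {F : Set (Finset ℕ)} {pa : Finset ℕ × Set ℕ}
    (h : ∃ N, N ⊆ pa.2 ∧ N.Infinite ∧
      ∀ s ∈ pa.1.powerset, (∀ x ∈ N, ∀ y ∈ s, y < x) ∧ ∀ n ∈ N, Rej F N (insert n s)) :
    ∃ n N, N ⊆ pa.2 ∧ N.Infinite ∧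
      (∀ s ∈ pa.1.powerset, (∀ x ∈ N, ∀ y ∈ s, y < x) ∧ ∀ m ∈ N, Rej F N (insert m s)) ∧
      n ∈ N ∧ stepB F pa = (insert n pa.1, N \ Set.Iic n) := by
  classical
  refine ⟨sInf h.choose, h.choose, h.choose_spec.1, h.choose_spec.2.1, h.choose_spec.2.2,
    Nat.sInf_mem h.choose_spec.2.1.nonempty, ?_⟩
  unfold stepB
  rw [dif_pos h]

/-- Claim B: if `M` rejects `∅`, there is an infinite subset none of whose
finite subsets belongs to `F`. -/
lemma exists_all_reject {F : Set (Finset ℕ)} {M : Set ℕ} (hM : M.Infinite)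
    (hrej : Rej F M ∅) :
    ∃ N, N ⊆ M ∧ N.Infinite ∧ ∀ s : Finset ℕ, ↑s ⊆ N → s ∉ F := by
  classical
  set f : ℕ → Finset ℕ × Set ℕ := fun i => (stepB F)^[i] (∅, M) with hfdef
  have hfsucc : ∀ i, f (i + 1) = stepB F (f i) := by
    intro i; simp [hfdef, Function.iterate_succ_apply']
  set Inv : Finset ℕ × Set ℕ → Prop := fun pa =>
    pa.2.Infinite ∧ pa.2 ⊆ M ∧ (∀ s : Finset ℕ, s ⊆ pa.1 → Rej F pa.2 s) ∧
      (∀ x ∈ pa.2, ∀ y ∈ pa.1, y < x) ∧ ↑pa.1 ⊆ M with hInv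
  have hcond : ∀ pa, Inv pa → ∃ N, N ⊆ pa.2 ∧ N.Infinite ∧
      ∀ s ∈ pa.1.powerset, (∀ x ∈ N, ∀ y ∈ s, y < x) ∧ ∀ n ∈ N, Rej F N (insert n s) := by
    rintro pa ⟨h1, h2, h3, h4, h5⟩
    exact exists_strong_finset pa.1.powerset pa.2 h1
      (fun s hs => h3 s (Finset.mem_powerset.1 hs))
  have hInv0 : Inv (f 0) := by
    have hf0 : f 0 = (∅, M) := rfl
    rw [hf0]
    refine ⟨hM, subset_rfl, ?_, by simp, by simp⟩
    intro s hs
    rw [Finset.subset_empty.1 hs]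
    exact hrej
  have hInvStep : ∀ pa, Inv pa → Inv (stepB F pa) ∧
      pa.1 ⊆ (stepB F pa).1 ∧ (stepB F pa).2 ⊆ pa.2 ∧ (stepB F pa).1.card = pa.1.card + 1 ∧
      (∀ x ∈ (stepB F pa).2, ∀ y ∈ (stepB F pa).1, y < x) := by
    intro pa hpa
    obtain ⟨n, N, hNsub, hNinf, hNspec, hnN, heq⟩ := stepB_spec (hcond pa hpa)
    obtain ⟨h1, h2, h3, h4, h5⟩ := hpa
    have habove : ∀ x ∈ N, ∀ y ∈ pa.1, y < x :=
      (hNspec pa.1 (Finset.mem_powerset_self pa.1)).1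
    have hnM : n ∈ M := h2 (hNsub hnN)
    have hnnotp : n ∉ pa.1 := fun hc => lt_irrefl n (habove n hnN n hc)
    have habove' : ∀ x ∈ N \ Set.Iic n, ∀ y ∈ insert n pa.1, y < x := by
      rintro x ⟨hxN, hxgt⟩ y hy
      rcases Finset.mem_insert.1 hy with rfl | hy
      · simpa using hxgt
      · exact habove x hxN y hy
    rw [heq]
    refine ⟨⟨hNinf.diff (Set.finite_Iic _), (Set.diff_subset.trans hNsub).trans h2, ?_,
        habove', ?_⟩, Finset.subset_insert _ _, Set.diff_subset.trans hNsub,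
        Finset.card_insert_of_notMem hnnotp, habove'⟩
    · intro s hs
      by_cases hns : n ∈ s
      · have : s = insert n (s.erase n) := by simp [hns]
        rw [this]
        have herase : s.erase n ⊆ pa.1 := by
          intro x hx
          rcases Finset.mem_insert.1 (hs (Finset.mem_of_mem_erase hx)) with rfl | h
          · exact absurd rfl (Finset.ne_of_mem_erase hx)
          · exact h
        exact ((hNspec (s.erase n) (Finset.mem_powerset.2 herase)).2 n hnN).mono Set.diff_subset
      · have : s ⊆ pa.1 := by
          intro x hx
          rcases Finset.mem_insert.1 (hs hx) with rfl | h
          · exact absurd hx hns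
          · exact h
        exact ((h3 s this).mono hNsub).mono Set.diff_subset
    · intro x hx
      rcases Finset.mem_insert.1 hx with rfl | h
      · exact hnM
      · exact h5 h
  have hInvAll : ∀ i, Inv (f i) := by
    intro i; induction i with
    | zero => exact hInv0
    | succ i ih => rw [hfsucc]; exact (hInvStep _ ih).1
  have hpmono : ∀ i j, i ≤ j → (f i).1 ⊆ (f j).1 := by
    intro i j hij
    induction j with
    | zero => simpa [Nat.le_zero.1 hij]
    | succ j ih =>
      rcases Nat.lt_or_ge i (j+1) with h | h
      · refine (ih (Nat.lt_succ_iff.1 h)).trans ?_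
        rw [hfsucc]; exact (hInvStep _ (hInvAll j)).2.1
      · have : i = j + 1 := le_antisymm hij h
        simp [this]
  have hcard : ∀ i, (f i).1.card = i := by
    intro i; induction i with
    | zero => simp [hfdef]
    | succ i ih => rw [hfsucc]; rw [(hInvStep _ (hInvAll i)).2.2.2.1, ih]
  set Nf : Set ℕ := ⋃ i, ↑(f i).1 with hNf
  have hNfM : Nf ⊆ M := by
    rintro x hx
    rcases Set.mem_iUnion.1 hx with ⟨i, hi⟩
    exact (hInvAll i).2.2.2.2 hi
  have hNfinf : Nf.Infinite := by
    intro hfin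
    have hsub : (f (hfin.toFinset.card + 1)).1 ⊆ hfin.toFinset := by
      intro x hx
      rw [Set.Finite.mem_toFinset]
      exact Set.mem_iUnion.2 ⟨hfin.toFinset.card + 1, hx⟩
    have := Finset.card_le_card hsub
    rw [hcard] at this
    omega
  have hex : ∀ s : Finset ℕ, ↑s ⊆ Nf → ∃ i, s ⊆ (f i).1 := by
    intro s
    induction s using Finset.induction_on with
    | empty => intro _; exact ⟨0, by simp⟩
    | @insert x s hxs ih =>
      intro hsub
      obtain ⟨i₁, hi₁⟩ := ih fun y hy =>
        hsub (by simp only [Finset.coe_insert, Set.mem_insert_iff]; right; exact_mod_cast hy)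
      obtain ⟨i₂, hi₂⟩ := Set.mem_iUnion.1
        (hsub (by simp only [Finset.coe_insert, Set.mem_insert_iff]; left; rfl))
      refine ⟨max i₁ i₂, fun y hy => ?_⟩
      rcases Finset.mem_insert.1 hy with rfl | hy
      · exact hpmono i₂ _ (le_max_right _ _) (by exact_mod_cast hi₂)
      · exact hpmono i₁ _ (le_max_left _ _) (hi₁ hy)
  refine ⟨Nf, hNfM, hNfinf, ?_⟩
  intro s hs hsF
  obtain ⟨i, hi⟩ := hex s hs
  exact not_rej_of_mem hsF (hInvAll i).1 ((hInvAll i).2.2.1 s hi)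


/-- The Nash–Williams theorem. -/
theorem nashWilliams (F : Set (Finset ℕ)) (M : Set ℕ) (hM : M.Infinite) :
    (∃ N, N ⊆ M ∧ N.Infinite ∧ ∀ s : Finset ℕ, ↑s ⊆ N → s ∉ F) ∨
    (∃ N, N ⊆ M ∧ N.Infinite ∧ ∀ P : Set ℕ, P ⊆ N → P.Infinite →
      ∃ t, IsInit t P ∧ t ∈ F) := by
  by_cases h : Rej F M ∅
  · exact Or.inl (exists_all_reject hM h)
  · right
    unfold Rej at h
    push_neg at h
    obtain ⟨N, hNM, hNinf, hacc⟩ := h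
    refine ⟨N, hNM, hNinf, fun P hP hPinf => ?_⟩
    obtain ⟨t, hinit, htF⟩ := hacc P hP hPinf (by simp)
    exact ⟨t, hinit, by simpa using htF⟩

section Alt

variable {γ : Type*}

/-- Alternating intersection along a list: `alt C D [a,b,c,...] = C a ∩ D b ∩ C c ∩ ...` -/
def alt (C D : ℕ → Set γ) : List ℕ → Set γ
  | [] => Set.univ
  | a :: l => C a ∩ alt D C l

lemma alt_append (C D : ℕ → Set γ) (l₁ l₂ : List ℕ) :
    alt C D (l₁ ++ l₂) ⊆ if Even l₁.length then alt C D l₂ else alt D C l₂ := by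
  induction l₁ generalizing C D with
  | nil => simp
  | cons a l ih =>
    intro x hx
    have hx' : x ∈ alt D C (l ++ l₂) := hx.2
    have h2 := ih D C hx'
    simp only [List.length_cons, Nat.even_add_one]
    by_cases h : Even l.length
    · rw [if_pos h] at h2
      rw [if_neg (by simpa using h)]
      exact h2
    · rw [if_neg h] at h2
      rw [if_pos (by simpa using h)]
      exact h2

lemma alt_append_even (C D : ℕ → Set γ) {l₁ : List ℕ} (l₂ : List ℕ)
    (h : Even l₁.length) : alt C D (l₁ ++ l₂) ⊆ alt C D l₂ := by
  have := alt_append C D l₁ l₂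
  rwa [if_pos h] at this

lemma list_toFinset_map (f : ℕ → ℕ) (l : List ℕ) : (l.map f).toFinset = l.toFinset.image f := by
  induction l with
  | nil => simp
  | cons a l ih => simp [ih]

lemma list_toFinset_range (n : ℕ) : (List.range n).toFinset = Finset.range n := by
  ext x; simp

/-- A downward-closed finset of naturals is an initial range. -/
lemma downward_closed_eq_range {J : Finset ℕ} (h : ∀ j ∈ J, ∀ i ≤ j, i ∈ J) :
    J = Finset.range J.card := by
  rcases J.eq_empty_or_nonempty with rfl | hne
  · simp
  · have hmax := J.max'_mem hne
    have hJ : J = Finset.range (J.max' hne + 1) := by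
      ext x
      simp only [Finset.mem_range, Nat.lt_succ_iff]
      exact ⟨fun hx => J.le_max' x hx, fun hx => h _ hmax x hx⟩
    have hc : J.card = J.max' hne + 1 := by
      conv_lhs => rw [hJ]
      exact Finset.card_range _
    rw [hc]
    exact hJ

/-- An initial segment of the range of a strictly monotone function is the image
of an initial range. -/
lemma isInit_range_strictMono {u : ℕ → ℕ} (hu : StrictMono u) {t : Finset ℕ}
    (ht : IsInit t (Set.range u)) : t = Finset.image u (Finset.range t.card) := by
  classical
  have hsub : ∀ x ∈ t, ∃ j, u j = x := fun x hx => ht.1 hx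
  have hdc : ∀ j j', j ≤ j' → u j' ∈ t → u j ∈ t := by
    intro j j' hjj' hj'
    by_contra hj
    have := ht.2 (u j) ⟨j, rfl⟩ hj (u j') hj'
    exact absurd (hu.le_iff_le.2 hjj') (not_le.2 this)
  set B := t.sup id with hB
  set Jf := (Finset.range (B+1)).filter (fun j => u j ∈ t) with hJf
  have himg : Jf.image u = t := by
    ext x
    simp only [hJf, Finset.mem_image, Finset.mem_filter, Finset.mem_range]
    constructor
    · rintro ⟨j, ⟨_, hj⟩, rfl⟩; exact hj
    · intro hx
      obtain ⟨j, rfl⟩ := hsub x hx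
      refine ⟨j, ⟨?_, hx⟩, rfl⟩
      have h1 : j ≤ u j := hu.le_apply
      have hle : u j ≤ B := Finset.le_sup (f := id) hx
      omega
  have hcard : Jf.card = t.card := by
    rw [← himg, Finset.card_image_of_injective _ hu.injective]
  have hdcJ : ∀ j ∈ Jf, ∀ i ≤ j, i ∈ Jf := by
    intro j hj i hij
    simp only [hJf, Finset.mem_filter, Finset.mem_range] at hj ⊢
    exact ⟨by omega, hdc i j hij hj.2⟩
  calc t = Jf.image u := himg.symm
    _ = (Finset.range Jf.card).image u := by rw [← downward_closed_eq_range hdcJ]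
    _ = (Finset.range t.card).image u := by rw [hcard]

end Alt

/-- Rosenthal's combinatorial lemma: if every infinite subset of `M` admits a point lying in
infinitely many `A n` and infinitely many `B n`, then some subsequence is independent. -/
theorem exists_independent {γ : Type*} (A B : ℕ → Set γ) {M : Set ℕ} (hM : M.Infinite)
    (hyp : ∀ N : Set ℕ, N ⊆ M → N.Infinite →
      ∃ x, {n | n ∈ N ∧ x ∈ A n}.Infinite ∧ {n | n ∈ N ∧ x ∈ B n}.Infinite) :
    ∃ ρ : ℕ → ℕ, StrictMono ρ ∧
      ∀ F G : Finset ℕ, Disjoint F G →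
        ∃ x, (∀ i ∈ F, x ∈ A (ρ i)) ∧ (∀ i ∈ G, x ∈ B (ρ i)) := by
  classical
  set FF : Set (Finset ℕ) := {t | ∃ l : List ℕ, l.Pairwise (· < ·) ∧ l.toFinset = t ∧
    Even l.length ∧ alt A B l = ∅} with hFF
  rcases nashWilliams FF M hM with ⟨N, hNM, hNinf, hgood⟩ | ⟨N, hNM, hNinf, hbad⟩
  · -- no finite subset of N is in FF: build the independent subsequence
    set e : ℕ → ℕ := Nat.nth (· ∈ N) with he
    have hemono : StrictMono e := Nat.nth_strictMono hNinf
    have hemem : ∀ i, e i ∈ N := fun i => Nat.nth_mem_of_infinite hNinf i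
    refine ⟨fun i => e (3*i+1), fun i j hij => hemono (by omega), ?_⟩
    intro F G hFG
    set bl : ℕ → List ℕ := fun i =>
      if i ∈ F then [e (3*i+1), e (3*i+2)] else [e (3*i), e (3*i+1)] with hbl
    have hblF : ∀ i, i ∈ F → bl i = [e (3*i+1), e (3*i+2)] := by
      intro i h; simp only [hbl, if_pos h]
    have hblnF : ∀ i, i ∉ F → bl i = [e (3*i), e (3*i+1)] := by
      intro i h; simp only [hbl, if_neg h]
    have hblmem : ∀ i, ∀ x ∈ bl i, ∃ j, (3*i ≤ j ∧ j ≤ 3*i+2) ∧ x = e j := by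
      intro i x hx
      by_cases h : i ∈ F
      · rw [hblF i h] at hx
        simp only [List.mem_cons, List.not_mem_nil, or_false] at hx
        rcases hx with rfl | rfl
        exacts [⟨3*i+1, by omega, rfl⟩, ⟨3*i+2, by omega, rfl⟩]
      · rw [hblnF i h] at hx
        simp only [List.mem_cons, List.not_mem_nil, or_false] at hx
        rcases hx with rfl | rfl
        exacts [⟨3*i, by omega, rfl⟩, ⟨3*i+1, by omega, rfl⟩]
    have hbllen : ∀ i, (bl i).length = 2 := by
      intro i
      by_cases h : i ∈ F
      · rw [hblF i h]; rfl
      · rw [hblnF i h]; rfl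
    have hblsorted : ∀ i, (bl i).Pairwise (· < ·) := by
      intro i
      by_cases h : i ∈ F
      · rw [hblF i h]
        refine List.pairwise_cons.2 ⟨?_, List.pairwise_singleton _ _⟩
        intro b hb
        simp only [List.mem_singleton] at hb
        subst hb
        exact hemono (by omega)
      · rw [hblnF i h]
        refine List.pairwise_cons.2 ⟨?_, List.pairwise_singleton _ _⟩
        intro b hb
        simp only [List.mem_singleton] at hb
        subst hb
        exact hemono (by omega)
    -- the chain of blocks
    set L : ℕ → List ℕ := fun m => Nat.rec [] (fun i acc => acc ++ bl i) m with hL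
    have hLsucc : ∀ m, L (m+1) = L m ++ bl m := fun m => rfl
    have hLlen : ∀ m, (L m).length = 2*m := by
      intro m; induction m with
      | zero => rfl
      | succ m ih => rw [hLsucc, List.length_append, ih, hbllen]; omega
    have hLmem : ∀ m, ∀ x ∈ L m, ∃ j, j < 3*m ∧ x = e j := by
      intro m; induction m with
      | zero => intro x hx; exact absurd hx List.not_mem_nil
      | succ m ih =>
        intro x hx
        rw [hLsucc] at hx
        rcases List.mem_append.1 hx with h | h
        · obtain ⟨j, hj, rfl⟩ := ih x h; exact ⟨j, by omega, rfl⟩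
        · obtain ⟨j, hj, rfl⟩ := hblmem m x h; exact ⟨j, by omega, rfl⟩
    have hLsorted : ∀ m, (L m).Pairwise (· < ·) := by
      intro m; induction m with
      | zero => exact List.Pairwise.nil
      | succ m ih =>
        rw [hLsucc]
        rw [List.pairwise_append]
        refine ⟨ih, hblsorted m, ?_⟩
        intro x hx y hy
        obtain ⟨j, hj, rfl⟩ := hLmem m x hx
        obtain ⟨j', hj', rfl⟩ := hblmem m y hy
        exact hemono (by omega)
    have hLN : ∀ m, ∀ x ∈ L m, x ∈ N := by
      intro m x hx
      obtain ⟨j, _, rfl⟩ := hLmem m x hx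
      exact hemem j
    -- decomposition of the chain
    have hdecomp : ∀ i k, ∃ rest, L (i + 1 + k) = L i ++ (bl i ++ rest) := by
      intro i k
      induction k with
      | zero => exact ⟨[], by rw [show i+1+0 = i+1 from rfl, hLsucc]; simp⟩
      | succ k ih =>
        obtain ⟨rest, hrest⟩ := ih
        refine ⟨rest ++ bl (i+1+k), ?_⟩
        rw [show i+1+(k+1) = (i+1+k)+1 by omega, hLsucc, hrest]
        simp
    -- the chain gives a nonempty alternating intersection
    obtain ⟨m, hmlt⟩ : ∃ m, ∀ i ∈ F ∪ G, i < m := by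
      refine ⟨(F ∪ G).sup id + 1, fun i hi => ?_⟩
      have := Finset.le_sup (f := id) hi
      simp only [id_eq] at this
      omega
    have hEvenLm : Even (L m).length := by rw [hLlen]; exact even_two_mul m
    have hnonempty : alt A B (L m) ≠ ∅ := by
      intro hempty
      refine hgood (L m).toFinset ?_ ⟨L m, hLsorted m, rfl, hEvenLm, hempty⟩
      intro y hy
      simp only [List.coe_toFinset, Set.mem_setOf_eq] at hy
      exact hLN m y hy
    obtain ⟨x, hx⟩ := Set.nonempty_iff_ne_empty.2 hnonempty
    refine ⟨x, ?_, ?_⟩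
    · intro i hiF
      have him := hmlt i (Finset.mem_union_left _ hiF)
      obtain ⟨k, hk⟩ : ∃ k, m = i + 1 + k := ⟨m - (i+1), by omega⟩
      obtain ⟨rest, hrest⟩ := hdecomp i k
      rw [hk, hrest] at hx
      have h2 := alt_append_even A B (bl i ++ rest) (by rw [hLlen]; exact even_two_mul i) hx
      rw [hblF i hiF] at h2
      exact h2.1
    · intro i hiG
      have him := hmlt i (Finset.mem_union_right _ hiG)
      obtain ⟨k, hk⟩ : ∃ k, m = i + 1 + k := ⟨m - (i+1), by omega⟩
      obtain ⟨rest, hrest⟩ := hdecomp i k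
      rw [hk, hrest] at hx
      have h2 := alt_append_even A B (bl i ++ rest) (by rw [hLlen]; exact even_two_mul i) hx
      rw [hblnF i (fun hc => (Finset.disjoint_left.1 hFG hc) hiG)] at h2
      exact h2.2.1
  · -- the "initial segment" case leads to a contradiction
    exfalso
    obtain ⟨x, hIA, hIB⟩ := hyp N hNM hNinf
    set IA := {n | n ∈ N ∧ x ∈ A n} with hIAdef
    set IB := {n | n ∈ N ∧ x ∈ B n} with hIBdef
    -- build an alternating sequence
    have hstep : ∀ (k : ℕ) (a : ℕ), ∃ b, b ∈ (if Even k then IA else IB) ∧ a < b := by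
      intro k a
      split_ifs
      · obtain ⟨b, hb, hab⟩ := hIA.exists_gt a; exact ⟨b, hb, hab⟩
      · obtain ⟨b, hb, hab⟩ := hIB.exists_gt a; exact ⟨b, hb, hab⟩
    set u : ℕ → ℕ := fun k => Nat.rec (sInf IA) (fun k prev => (hstep (k+1) prev).choose) k
      with hu
    have husucc : ∀ k, u (k+1) = (hstep (k+1) (u k)).choose := fun k => rfl
    have humem : ∀ k, u k ∈ (if Even k then IA else IB) := by
      intro k
      cases k with
      | zero => rw [if_pos Even.zero]; exact Nat.sInf_mem hIA.nonempty
      | succ k => rw [husucc]; exact (hstep (k+1) (u k)).choose_spec.1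
    have humono : StrictMono u := strictMono_nat_of_lt_succ (by
      intro k; rw [husucc]; exact (hstep (k+1) (u k)).choose_spec.2)
    have huN : ∀ k, u k ∈ N := by
      intro k
      have := humem k
      split_ifs at this
      · exact this.1
      · exact this.1
    obtain ⟨t, htinit, htFF⟩ := hbad (Set.range u) (by rintro _ ⟨k, rfl⟩; exact huN k)
      (Set.infinite_range_of_injective humono.injective)
    obtain ⟨l, hlsort, hltof, hleven, hlalt⟩ := htFF
    -- identify l with the list of first elements of u
    have ht : t = Finset.image u (Finset.range t.card) := isInit_range_strictMono humono htinit
    have hl2 : l = (List.range t.card).map u := by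
      haveI : IsAntisymm ℕ (· < ·) := ⟨fun a b h1 h2 => absurd (h1.trans h2) (lt_irrefl a)⟩
      refine (fun hp hs => List.Perm.eq_of_pairwise (fun a b _ _ h1 h2 => absurd (h1.trans h2) (lt_irrefl a)) hlsort hs hp) (List.perm_of_nodup_nodup_toFinset_eq ?_ ?_ ?_) ?_
      · exact hlsort.nodup
      · exact List.nodup_range.map humono.injective
      · rw [hltof, list_toFinset_map, list_toFinset_range, ← ht]
      · exact List.pairwise_map.2 (List.pairwise_lt_range.imp (fun h => humono h))
    -- but x belongs to every alternating intersection along u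
    have hxalt : ∀ k j, (Even j → x ∈ alt A B ((List.range' j k).map u)) ∧
        (¬Even j → x ∈ alt B A ((List.range' j k).map u)) := by
      intro k
      induction k with
      | zero => intro j; constructor <;> intro _ <;> exact Set.mem_univ x
      | succ k ih =>
        intro j
        rw [List.range'_succ (s := j) (n := k) (step := 1)]
        constructor
        · intro hj
          refine ⟨?_, (ih (j+1)).2 (by simp [Nat.even_add_one, hj])⟩
          have := humem j; rw [if_pos hj] at this; exact this.2
        · intro hj
          refine ⟨?_, (ih (j+1)).1 (by simp [Nat.even_add_one, hj])⟩
          have := humem j; rw [if_neg hj] at this; exact this.2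
    have hmem : x ∈ alt A B l := by
      rw [hl2, List.range_eq_range']
      exact (hxalt t.card 0).1 Even.zero
    rw [hlalt] at hmem
    exact hmem

section Embed

variable {X : Type*} [NormedAddCommGroup X] [NormedSpace ℝ X] [CompleteSpace X]

theorem exists_embedding (y : ℕ → X) (hy : ∀ n, ‖y n‖ ≤ 1) (r s : ℝ) (hrs : r < s)
    (hind : ∀ F G : Finset ℕ, Disjoint F G →
      ∃ f : StrongDual ℝ X, ‖f‖ ≤ 1 ∧ (∀ i ∈ F, f (y i) < r) ∧ (∀ i ∈ G, s < f (y i))) :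
    ∃ (T : lp (fun _ : ℕ => ℝ) 1 →L[ℝ] X) (c : ℝ),
        0 < c ∧ ∀ v : lp (fun _ : ℕ => ℝ) 1, c * ‖v‖ ≤ ‖T v‖ := by
  classical
  have hnorm : ∀ v : lp (fun _ : ℕ => ℝ) 1, HasSum (fun i => ‖v i‖) ‖v‖ := by
    intro v
    have := lp.hasSum_norm (p := 1) (by norm_num) v
    simpa using this
  have hsummand : ∀ (v : lp (fun _ : ℕ => ℝ) 1) i, ‖v i • y i‖ ≤ ‖v i‖ := by
    intro v i
    rw [norm_smul]
    exact mul_le_of_le_one_right (norm_nonneg _) (hy i)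
  have key : ∀ v : lp (fun _ : ℕ => ℝ) 1, Summable (fun i => v i • y i) :=
    fun v => Summable.of_norm_bounded (hnorm v).summable (hsummand v)
  set Tlin : lp (fun _ : ℕ => ℝ) 1 →ₗ[ℝ] X := {
    toFun := fun v => ∑' i, v i • y i
    map_add' := by
      intro v w
      have h : ∀ i, (↑(v + w) : ∀ _ : ℕ, ℝ) i • y i = v i • y i + w i • y i := by
        intro i
        rw [lp.coeFn_add]
        simp [add_smul]
      simp only []
      rw [tsum_congr h, Summable.tsum_add (key v) (key w)]
    map_smul' := by
      intro c v
      have h : ∀ i, (↑(c • v) : ∀ _ : ℕ, ℝ) i • y i = c • (v i • y i) := by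
        intro i
        rw [lp.coeFn_smul]
        simp [smul_smul]
      simp only [RingHom.id_apply]
      rw [tsum_congr h]
      exact Summable.tsum_const_smul c (key v) } with hTlin
  have hTbound : ∀ v, ‖Tlin v‖ ≤ 1 * ‖v‖ := by
    intro v
    rw [one_mul]
    calc ‖∑' i, v i • y i‖ ≤ ∑' i, ‖v i • y i‖ :=
          norm_tsum_le_tsum_norm (Summable.of_nonneg_of_le (fun i => norm_nonneg _)
            (hsummand v) (hnorm v).summable)
      _ ≤ ∑' i, ‖v i‖ := Summable.tsum_le_tsum (hsummand v)
          (Summable.of_nonneg_of_le (fun i => norm_nonneg _) (hsummand v) (hnorm v).summable)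
          (hnorm v).summable
      _ = ‖v‖ := (hnorm v).tsum_eq
  set T := Tlin.mkContinuous 1 hTbound with hT
  refine ⟨T, (s - r)/2, by linarith, ?_⟩
  intro v
  have hTv : T v = ∑' i, v i • y i := rfl
  -- it suffices to prove the bound up to arbitrary δ > 0
  have main : ∀ δ > (0:ℝ), (s - r) * ‖v‖ ≤ 2 * ‖T v‖ + δ := by
    intro δ hδ
    set ε := δ / (s - r + 2) with hε
    have hεpos : 0 < ε := div_pos hδ (by linarith)
    -- choose a finite set catching most of the norm
    obtain ⟨F₀, hF₀⟩ : ∃ F₀ : Finset ℕ, ‖v‖ - ε < ∑ i ∈ F₀, ‖v i‖ := by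
      have := (hnorm v).eventually (eventually_gt_nhds (by linarith : ‖v‖ - ε < ‖v‖))
      exact this.exists
    have hsumnorm : Summable (fun i => ‖v i‖) := (hnorm v).summable
    have htail : ∑' i : ↑(↑F₀ : Set ℕ)ᶜ, ‖v (i : ℕ)‖ ≤ ε := by
      have hcompl := Summable.sum_add_tsum_compl (s := F₀) hsumnorm
      have h2 : (∑' i, ‖v i‖) = ‖v‖ := (hnorm v).tsum_eq
      linarith
    set P := F₀.filter (fun i => 0 ≤ v i) with hP
    set Ns := F₀.filter (fun i => v i < 0) with hNs
    have hdisj : Disjoint Ns P := by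
      rw [Finset.disjoint_left]
      intro i hiNs hiP
      rw [hNs, Finset.mem_filter] at hiNs
      rw [hP, Finset.mem_filter] at hiP
      linarith [hiNs.2, hiP.2]
    obtain ⟨f, hf1, hfr, hfs⟩ := hind Ns P hdisj
    obtain ⟨g, hg1, hgr, hgs⟩ := hind P Ns hdisj.symm
    set h : StrongDual ℝ X := f - g with hh
    have hnormh : ‖h‖ ≤ 2 := by
      calc ‖f - g‖ ≤ ‖f‖ + ‖g‖ := norm_sub_le f g
        _ ≤ 2 := by linarith
    have hbnd : ∀ i, ‖v i * h (y i)‖ ≤ 2 * ‖v i‖ := by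
      intro i
      rw [norm_mul]
      have hyi : ‖h (y i)‖ ≤ 2 := by
        calc ‖h (y i)‖ ≤ ‖h‖ * ‖y i‖ := h.le_opNorm _
          _ ≤ 2 * 1 := mul_le_mul hnormh (hy i) (norm_nonneg _) (by norm_num)
          _ = 2 := by norm_num
      calc ‖v i‖ * ‖h (y i)‖ ≤ ‖v i‖ * 2 :=
            mul_le_mul_of_nonneg_left hyi (norm_nonneg _)
        _ = 2 * ‖v i‖ := by ring
    have hsummable2 : Summable (fun i => v i * h (y i)) :=
      Summable.of_norm_bounded (g := fun i => 2 * ‖v i‖) (hsumnorm.mul_left 2) hbnd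
    have hhTv : h (T v) = ∑' i, v i * h (y i) := by
      rw [hTv, ContinuousLinearMap.map_tsum h (key v)]
      exact tsum_congr (fun i => by rw [map_smul]; rfl)
    -- split the sum
    have hsplit : (∑ i ∈ F₀, v i * h (y i)) + (∑' i : ↑(↑F₀ : Set ℕ)ᶜ, v (i : ℕ) * h (y (i : ℕ)))
        = ∑' i, v i * h (y i) := Summable.sum_add_tsum_compl (s := F₀) hsummable2
    -- main term estimate
    have hmain : (s - r) * ∑ i ∈ F₀, ‖v i‖ ≤ ∑ i ∈ F₀, v i * h (y i) := by
      rw [Finset.mul_sum]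
      apply Finset.sum_le_sum
      intro i hi
      by_cases hvi : 0 ≤ v i
      · have hiP : i ∈ P := by rw [hP, Finset.mem_filter]; exact ⟨hi, hvi⟩
        have h1 : s < f (y i) := hfs i hiP
        have h2 : g (y i) < r := hgr i hiP
        have h3 : s - r < h (y i) := by
          have heq : h (y i) = f (y i) - g (y i) := rfl
          rw [heq]; linarith
        have heq2 : ‖v i‖ = v i := by rw [Real.norm_eq_abs, abs_of_nonneg hvi]
        rw [heq2, mul_comm (s - r)]
        exact mul_le_mul_of_nonneg_left (le_of_lt h3) hvi
      · push_neg at hvi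
        have hiNs : i ∈ Ns := by rw [hNs, Finset.mem_filter]; exact ⟨hi, hvi⟩
        have h1 : f (y i) < r := hfr i hiNs
        have h2 : s < g (y i) := hgs i hiNs
        have h3 : h (y i) < r - s := by
          have heq : h (y i) = f (y i) - g (y i) := rfl
          rw [heq]; linarith
        have hnv : ‖v i‖ = -v i := by rw [Real.norm_eq_abs, abs_of_neg hvi]
        rw [hnv]
        have h5 := mul_lt_mul_of_neg_left h3 hvi
        have h6 : (s - r) * -(v i) = v i * (r - s) := by ring
        linarith
    -- tail estimate
    have htail2 : ‖∑' i : ↑(↑F₀ : Set ℕ)ᶜ, v (i : ℕ) * h (y (i : ℕ))‖ ≤ 2 * ε := by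
      have hsubn : Summable (fun i : ↑(↑F₀ : Set ℕ)ᶜ => ‖v (i : ℕ) * h (y (i : ℕ))‖) :=
        Summable.of_nonneg_of_le (fun i => norm_nonneg _) (fun i => hbnd (i : ℕ))
          ((hsumnorm.mul_left 2).subtype _)
      calc ‖∑' i : ↑(↑F₀ : Set ℕ)ᶜ, v (i : ℕ) * h (y (i : ℕ))‖
          ≤ ∑' i : ↑(↑F₀ : Set ℕ)ᶜ, ‖v (i : ℕ) * h (y (i : ℕ))‖ :=
            norm_tsum_le_tsum_norm hsubn
        _ ≤ ∑' i : ↑(↑F₀ : Set ℕ)ᶜ, 2 * ‖v (i : ℕ)‖ :=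
            Summable.tsum_le_tsum (fun i => hbnd (i : ℕ)) hsubn ((hsumnorm.mul_left 2).subtype _)
        _ = 2 * ∑' i : ↑(↑F₀ : Set ℕ)ᶜ, ‖v (i : ℕ)‖ := tsum_mul_left
        _ ≤ 2 * ε := by linarith [htail]
    -- put everything together
    have hhTv2 : h (T v) ≤ ‖h‖ * ‖T v‖ := by
      calc h (T v) ≤ |h (T v)| := le_abs_self _
        _ = ‖h (T v)‖ := (Real.norm_eq_abs _).symm
        _ ≤ ‖h‖ * ‖T v‖ := h.le_opNorm _
    have hchain : (s - r) * (‖v‖ - ε) - 2*ε ≤ 2 * ‖T v‖ := by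
      have e1 : (s - r) * (‖v‖ - ε) ≤ (s - r) * ∑ i ∈ F₀, ‖v i‖ :=
        mul_le_mul_of_nonneg_left (by linarith [hF₀]) (by linarith)
      have e2 : (∑ i ∈ F₀, v i * h (y i)) ≤ h (T v) + 2*ε := by
        have habs := (abs_le.1 (by rwa [Real.norm_eq_abs] at htail2)).1
        rw [hhTv]
        linarith [hsplit]
      have e3 : h (T v) ≤ 2 * ‖T v‖ := by
        calc h (T v) ≤ ‖h‖ * ‖T v‖ := hhTv2
          _ ≤ 2 * ‖T v‖ := mul_le_mul_of_nonneg_right hnormh (norm_nonneg _)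
      linarith
    have hδeq : (s - r) * ε + 2 * ε = δ := by
      have hne : s - r + 2 ≠ 0 := by linarith
      rw [hε]; field_simp
    have hexp : (s - r) * (‖v‖ - ε) = (s - r) * ‖v‖ - (s - r) * ε := by ring
    linarith [hchain]
  have h2 : (s - r) * ‖v‖ ≤ 2 * ‖T v‖ :=
    le_of_forall_pos_le_add main
  linarith

end Embed

section Rosenthal

variable {X : Type*} [NormedAddCommGroup X] [NormedSpace ℝ X] [CompleteSpace X]

/-- Rosenthal's ℓ₁ theorem: in a Banach space containing no copy of `ℓ₁`, every sequence in the
unit ball has a weakly Cauchy subsequence. -/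
theorem rosenthal_weak_cauchy
    (hX : ¬ ∃ (T : lp (fun _ : ℕ => ℝ) 1 →L[ℝ] X) (c : ℝ),
        0 < c ∧ ∀ v : lp (fun _ : ℕ => ℝ) 1, c * ‖v‖ ≤ ‖T v‖)
    (x : ℕ → X) (hx : ∀ n, ‖x n‖ ≤ 1) :
    ∃ σ : ℕ → ℕ, StrictMono σ ∧
      ∀ f : StrongDual ℝ X, ∃ L : ℝ, Tendsto (fun i => f (x (σ i))) atTop (𝓝 L) := by
  classical
  set q : ℕ → ℚ × ℚ := fun n => (Denumerable.eqv (ℚ × ℚ)).symm n with hq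
  have hqsurj : Function.Surjective q := (Denumerable.eqv (ℚ × ℚ)).symm.surjective
  set NoOsc : ℝ → ℝ → Set ℕ → Prop := fun r s N =>
    ∀ f : StrongDual ℝ X, ‖f‖ ≤ 1 →
      ¬({n | n ∈ N ∧ f (x n) < r}.Infinite ∧ {n | n ∈ N ∧ s < f (x n)}.Infinite) with hNoOsc
  set stepC : ℕ → Set ℕ → Set ℕ := fun i N =>
    if h : ∃ N', N' ⊆ N ∧ N'.Infinite ∧ NoOsc ((q i).1 : ℝ) ((q i).2 : ℝ) N'
    then h.choose else N with hstepC
  have hstep_sub : ∀ i N, stepC i N ⊆ N := by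
    intro i N
    rw [hstepC]
    dsimp only
    split_ifs with h
    · exact h.choose_spec.1
    · exact subset_rfl
  have hstep_inf : ∀ i N, N.Infinite → (stepC i N).Infinite := by
    intro i N hN
    rw [hstepC]
    dsimp only
    split_ifs with h
    · exact h.choose_spec.2.1
    · exact hN
  set Ms : ℕ → Set ℕ := fun i => Nat.rec Set.univ (fun i N => stepC i N) i with hMs
  have hMssucc : ∀ i, Ms (i+1) = stepC i (Ms i) := fun i => rfl
  have hMsinf : ∀ i, (Ms i).Infinite := by
    intro i; induction i with
    | zero => exact Set.infinite_univ
    | succ i ih => rw [hMssucc]; exact hstep_inf i _ ih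
  have hMsdec : ∀ i, Ms (i+1) ⊆ Ms i := fun i => by rw [hMssucc]; exact hstep_sub i _
  have hMsmono : ∀ i j, i ≤ j → Ms j ⊆ Ms i := by
    intro i j hij
    induction j with
    | zero => simpa [Nat.le_zero.1 hij]
    | succ j ih =>
      rcases Nat.lt_or_ge i (j+1) with h | h
      · exact (hMsdec j).trans (ih (Nat.lt_succ_iff.1 h))
      · have : i = j + 1 := le_antisymm hij h
        simp [this]
  -- Case II: some rational pair has oscillation on every infinite subset
  by_cases hcase : ∃ i : ℕ, ((q i).1 : ℝ) < ((q i).2 : ℝ) ∧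
      ¬ ∃ N', N' ⊆ Ms i ∧ N'.Infinite ∧ NoOsc ((q i).1 : ℝ) ((q i).2 : ℝ) N'
  · exfalso
    obtain ⟨i, hrs, hno⟩ := hcase
    set r : ℝ := ((q i).1 : ℝ) with hr
    set s : ℝ := ((q i).2 : ℝ) with hs
    set A : ℕ → Set (StrongDual ℝ X) := fun n => {f | ‖f‖ ≤ 1 ∧ f (x n) < r} with hA
    set B : ℕ → Set (StrongDual ℝ X) := fun n => {f | ‖f‖ ≤ 1 ∧ s < f (x n)} with hB
    have hyp : ∀ N : Set ℕ, N ⊆ Ms i → N.Infinite →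
        ∃ f : StrongDual ℝ X, {n | n ∈ N ∧ f ∈ A n}.Infinite ∧ {n | n ∈ N ∧ f ∈ B n}.Infinite := by
      intro N hNM hNinf
      by_contra hcon
      push_neg at hcon
      apply hno
      refine ⟨N, hNM, hNinf, ?_⟩
      intro f hf hosc
      exact (hosc.2.mono (t := {n | n ∈ N ∧ f ∈ B n}) (fun n hn => ⟨hn.1, hf, hn.2⟩))
        (hcon f (hosc.1.mono (fun n hn => ⟨hn.1, hf, hn.2⟩)))
    obtain ⟨ρ, hρmono, hρind⟩ := exists_independent A B (hMsinf i) hyp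
    refine hX (exists_embedding (fun k => x (ρ k)) (fun k => hx (ρ k)) r s hrs ?_)
    intro F G hFG
    obtain ⟨f, hfF, hfG⟩ := hρind F G hFG
    rcases F.eq_empty_or_nonempty with rfl | ⟨i₀, hi₀⟩
    · rcases G.eq_empty_or_nonempty with rfl | ⟨j₀, hj₀⟩
      · exact ⟨0, by simp, by simp, by simp⟩
      · exact ⟨f, (hfG j₀ hj₀).1, fun k hk => (hfF k hk).2, fun k hk => (hfG k hk).2⟩
    · exact ⟨f, (hfF i₀ hi₀).1, fun k hk => (hfF k hk).2, fun k hk => (hfG k hk).2⟩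
  -- Case I: all valid pairs get killed; diagonalize
  · push_neg at hcase
    have hMspec : ∀ i, ((q i).1 : ℝ) < ((q i).2 : ℝ) →
        NoOsc ((q i).1 : ℝ) ((q i).2 : ℝ) (Ms (i+1)) := by
      intro i hlt
      have hex := hcase i hlt
      rw [hMssucc, hstepC]
      dsimp only
      rw [dif_pos hex]
      exact hex.choose_spec.2.2
    -- diagonal sequence
    have hstepm : ∀ (i : ℕ) (a : ℕ), ∃ b, b ∈ Ms (i+2) ∧ a < b := by
      intro i a
      obtain ⟨b, hb, hab⟩ := (hMsinf (i+2)).exists_gt a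
      exact ⟨b, hb, hab⟩
    set m : ℕ → ℕ := fun i => Nat.rec (sInf (Ms 1)) (fun i prev => (hstepm i prev).choose) i
      with hm
    have hmsucc : ∀ i, m (i+1) = (hstepm i (m i)).choose := fun i => rfl
    have hmmem : ∀ i, m i ∈ Ms (i+1) := by
      intro i
      cases i with
      | zero => exact Nat.sInf_mem (hMsinf 1).nonempty
      | succ i => rw [hmsucc]; exact (hstepm i (m i)).choose_spec.1
    have hmmono : StrictMono m := strictMono_nat_of_lt_succ (by
      intro i; rw [hmsucc]; exact (hstepm i (m i)).choose_spec.2)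
    refine ⟨m, hmmono, ?_⟩
    -- first treat functionals in the unit ball
    have hball : ∀ f : StrongDual ℝ X, ‖f‖ ≤ 1 →
        ∃ L : ℝ, Tendsto (fun i => f (x (m i))) atTop (𝓝 L) := by
      intro f hf
      set a : ℕ → ℝ := fun i => f (x (m i)) with ha
      have habs : ∀ i, |a i| ≤ 1 := by
        intro i
        rw [← Real.norm_eq_abs]
        calc ‖f (x (m i))‖ ≤ ‖f‖ * ‖x (m i)‖ := f.le_opNorm _
          _ ≤ 1 * 1 := mul_le_mul hf (hx _) (norm_nonneg _) (by norm_num)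
          _ = 1 := by norm_num
      have hbdd_above : IsBoundedUnder (· ≤ ·) atTop a :=
        isBoundedUnder_of ⟨1, fun i => (abs_le.1 (habs i)).2⟩
      have hbdd_below : IsBoundedUnder (· ≥ ·) atTop a :=
        isBoundedUnder_of ⟨-1, fun i => (abs_le.1 (habs i)).1⟩
      have heq : liminf a atTop = limsup a atTop := by
        by_contra hne
        have hlt : liminf a atTop < limsup a atTop :=
          lt_of_le_of_ne (liminf_le_limsup hbdd_above hbdd_below) hne
        obtain ⟨r, hr1, hr2⟩ := exists_rat_btwn hlt
        obtain ⟨s, hs1, hs2⟩ := exists_rat_btwn hr2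
        obtain ⟨j, hj⟩ := hqsurj (r, s)
        have hrs : ((q j).1 : ℝ) < ((q j).2 : ℝ) := by
          rw [hj]; exact_mod_cast hs1
        have hnosc := hMspec j hrs f hf
        apply hnosc
        have hIr : {i | a i < (r : ℝ)}.Infinite := by
          rw [← Nat.frequently_atTop_iff_infinite]
          exact frequently_lt_of_liminf_lt hbdd_above.isCoboundedUnder_ge hr1
        have hIs : {i | (s : ℝ) < a i}.Infinite := by
          rw [← Nat.frequently_atTop_iff_infinite]
          exact frequently_lt_of_lt_limsup hbdd_below.isCoboundedUnder_le hs2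
        constructor
        · apply Set.Infinite.mono (s := m '' {i | a i < (r : ℝ) ∧ j ≤ i})
          · rintro _ ⟨i, ⟨hir, hij⟩, rfl⟩
            refine ⟨hMsmono (j+1) (i+1) (by omega) (hmmem i), ?_⟩
            rw [hj]
            exact hir
          · refine Set.Infinite.image (Set.injOn_of_injective hmmono.injective) ?_
            have : {i | a i < (r:ℝ) ∧ j ≤ i} = {i | a i < (r:ℝ)} \ {i | i < j} := by
              ext k; simp only [Set.mem_setOf_eq, Set.mem_diff, not_lt]
            rw [this]
            exact hIr.diff (Set.finite_Iio j)
        · apply Set.Infinite.mono (s := m '' {i | (s : ℝ) < a i ∧ j ≤ i})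
          · rintro _ ⟨i, ⟨his, hij⟩, rfl⟩
            refine ⟨hMsmono (j+1) (i+1) (by omega) (hmmem i), ?_⟩
            rw [hj]
            exact his
          · refine Set.Infinite.image (Set.injOn_of_injective hmmono.injective) ?_
            have : {i | (s:ℝ) < a i ∧ j ≤ i} = {i | (s:ℝ) < a i} \ {i | i < j} := by
              ext k; simp only [Set.mem_setOf_eq, Set.mem_diff, not_lt]
            rw [this]
            exact hIs.diff (Set.finite_Iio j)
      exact ⟨limsup a atTop, tendsto_of_liminf_eq_limsup heq rfl hbdd_above hbdd_below⟩
    intro f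
    rcases eq_or_ne f 0 with rfl | hf0
    · exact ⟨0, by simpa using tendsto_const_nhds⟩
    · have hfpos : (0:ℝ) < ‖f‖ := norm_pos_iff.2 hf0
      set g : StrongDual ℝ X := ‖f‖⁻¹ • f with hg
      have hgnorm : ‖g‖ ≤ 1 := by
        rw [hg, norm_smul, norm_inv, norm_norm]
        rw [inv_mul_cancel₀ (ne_of_gt hfpos)]
      obtain ⟨L, hL⟩ := hball g hgnorm
      refine ⟨‖f‖ * L, ?_⟩
      have : ∀ i, f (x (m i)) = ‖f‖ * g (x (m i)) := by
        intro i
        rw [hg]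
        simp [ContinuousLinearMap.smul_apply, smul_eq_mul]
        rw [← mul_assoc, mul_inv_cancel₀ (ne_of_gt hfpos), one_mul]
      simp only [this]
      exact hL.const_mul _
end Rosenthal

end NoL1

open NoL1 in
/-- **Lemma 2.5.** If a Banach space `X` contains no isomorphic copy of `ℓ₁`, then every bounded
sequence `(x*_n)` in `X*` satisfies `ca (x*_n) ≤ 3·ca_{ρ*} (x*_n)`. -/
theorem ca_le_three_caRhoStar_of_no_ell1 {X : Type*}
    [NormedAddCommGroup X] [NormedSpace ℝ X] [CompleteSpace X]
    (hX : ¬ ∃ (T : lp (fun _ : ℕ => ℝ) 1 →L[ℝ] X) (c : ℝ),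
        0 < c ∧ ∀ v : lp (fun _ : ℕ => ℝ) 1, c * ‖v‖ ≤ ‖T v‖)
    (φ : ℕ → StrongDual ℝ X) (hφ : ∃ M : ℝ, ∀ k, ‖φ k‖ ≤ M) :
    ca φ ≤ 3 * caRhoStar φ := by
  classical
  obtain ⟨M₀, hM₀⟩ := hφ
  set M := max M₀ 0 with hMdef
  have hM : ∀ k, ‖φ k‖ ≤ M := fun k => (hM₀ k).trans (le_max_left _ _)
  have hM0 : (0:ℝ) ≤ M := le_max_right _ _
  set s := caRhoStar φ with hsdef
  set c := ca φ with hcdef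
  have hcaeq : c = ⨅ n : ℕ, Metric.diam (φ '' Set.Ici n) := rfl
  -- generic bound on the evaluations
  have hbound : ∀ (j l : ℕ) (v : X), v ∈ Metric.closedBall (0:X) 1 →
      |(φ j - φ l) v| ≤ 2*M := by
    intro j l v hv
    rw [Metric.mem_closedBall, dist_zero_right] at hv
    rw [← Real.norm_eq_abs]
    calc ‖(φ j - φ l) v‖ ≤ ‖φ j - φ l‖ * ‖v‖ := (φ j - φ l).le_opNorm v
      _ ≤ (‖φ j‖ + ‖φ l‖) * 1 :=
          mul_le_mul (norm_sub_le _ _) hv (norm_nonneg _)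
            (by positivity)
      _ ≤ 2 * M := by
          have h1 := hM j; have h2 := hM l; linarith
  set SS := { r : ℝ | ∃ K : Set X,
    K ⊆ Metric.closedBall 0 1 ∧
    IsCompact (show Set (WeakSpace ℝ X) from K) ∧
    r = ⨅ n : ℕ, ⨆ j : Set.Ici n, ⨆ l : Set.Ici n, ⨆ v : K, |(φ j - φ l) (v : X)| } with hSS
  have hcaR : s = sSup SS := rfl
  -- bounds on the sup expression
  have hnn : ∀ (K : Set X) (n : ℕ),
      0 ≤ ⨆ j : Set.Ici n, ⨆ l : Set.Ici n, ⨆ v : K, |(φ j - φ l) (v : X)| := by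
    intro K n
    exact Real.iSup_nonneg (fun j => Real.iSup_nonneg (fun l =>
      Real.iSup_nonneg (fun v => abs_nonneg _)))
  have hle2M : ∀ (K : Set X), K ⊆ Metric.closedBall 0 1 → ∀ (n : ℕ),
      (⨆ j : Set.Ici n, ⨆ l : Set.Ici n, ⨆ v : K, |(φ j - φ l) (v : X)|) ≤ 2*M := by
    intro K hK n
    refine Real.iSup_le (fun j => Real.iSup_le (fun l => Real.iSup_le (fun v =>
      hbound j l v (hK v.2)) (by linarith)) (by linarith)) (by linarith)
  have hSbdd : BddAbove SS := by
    refine ⟨2*M, ?_⟩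
    rintro r ⟨K, hK1, hK2, rfl⟩
    refine le_trans (ciInf_le ⟨0, ?_⟩ 0) (hle2M K hK1 0)
    rintro _ ⟨n, rfl⟩
    exact hnn K n
  -- the key extraction lemma
  have key : ∀ (K : Set X), K ⊆ Metric.closedBall 0 1 →
      IsCompact (show Set (WeakSpace ℝ X) from K) → ∀ ε : ℝ, 0 < ε →
      ∃ n₀ : ℕ, ∀ j l : ℕ, n₀ ≤ j → n₀ ≤ l → ∀ v ∈ K, |(φ j - φ l) v| ≤ s + ε := by
    intro K hK1 hK2 ε hε
    have hrK : (⨅ n : ℕ, ⨆ j : Set.Ici n, ⨆ l : Set.Ici n, ⨆ v : K,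
        |(φ j - φ l) (v : X)|) ≤ s := by
      rw [hcaR]
      exact le_csSup hSbdd ⟨K, hK1, hK2, rfl⟩
    obtain ⟨n₀, hn₀⟩ := exists_lt_of_ciInf_lt (lt_of_le_of_lt hrK (by linarith : s < s + ε))
    refine ⟨n₀, ?_⟩
    intro j l hj hl v hv
    have b1 : BddAbove (Set.range (fun v' : K => |(φ j - φ l) (v' : X)|)) := by
      refine ⟨2*M, ?_⟩
      rintro _ ⟨v', rfl⟩
      exact hbound _ _ _ (hK1 v'.2)
    have step1 : |(φ j - φ l) v| ≤ ⨆ v' : K, |(φ j - φ l) (v' : X)| :=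
      le_ciSup b1 (⟨v, hv⟩ : K)
    have b2 : BddAbove (Set.range (fun l' : Set.Ici n₀ =>
        ⨆ v' : K, |(φ j - φ (l' : ℕ)) (v' : X)|)) := by
      refine ⟨2*M, ?_⟩
      rintro _ ⟨l', rfl⟩
      exact Real.iSup_le (fun v' => hbound _ _ _ (hK1 v'.2)) (by linarith)
    have step2 : (⨆ v' : K, |(φ j - φ l) (v' : X)|) ≤
        ⨆ l' : Set.Ici n₀, ⨆ v' : K, |(φ j - φ (l' : ℕ)) (v' : X)| :=
      le_ciSup b2 (⟨l, Set.mem_Ici.2 hl⟩ : Set.Ici n₀)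
    have b3 : BddAbove (Set.range (fun j' : Set.Ici n₀ => ⨆ l' : Set.Ici n₀,
        ⨆ v' : K, |(φ (j' : ℕ) - φ (l' : ℕ)) (v' : X)|)) := by
      refine ⟨2*M, ?_⟩
      rintro _ ⟨j', rfl⟩
      exact Real.iSup_le (fun l' => Real.iSup_le (fun v' => hbound _ _ _ (hK1 v'.2))
        (by linarith)) (by linarith)
    have step3 : (⨆ l' : Set.Ici n₀, ⨆ v' : K, |(φ j - φ (l' : ℕ)) (v' : X)|) ≤
        ⨆ j' : Set.Ici n₀, ⨆ l' : Set.Ici n₀, ⨆ v' : K, |(φ (j' : ℕ) - φ (l' : ℕ)) (v' : X)| :=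
      le_ciSup b3 (⟨j, Set.mem_Ici.2 hj⟩ : Set.Ici n₀)
    linarith [hn₀]
  -- caRhoStar is nonnegative
  have hs0 : (0:ℝ) ≤ s := by
    rw [hcaR]
    apply le_csSup hSbdd
    refine ⟨∅, Set.empty_subset _, isCompact_empty, ?_⟩
    have hz : ∀ n : ℕ, (⨆ j : Set.Ici n, ⨆ l : Set.Ici n,
        ⨆ v : (∅ : Set X), |(φ ↑j - φ ↑l) (v : X)|) = 0 := by
      intro n
      haveI : Nonempty ↥(Set.Ici n) := Set.nonempty_Ici.to_subtype
      have h1 : ∀ (j l : ↥(Set.Ici n)),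
          (⨆ v : (∅ : Set X), |(φ ↑j - φ ↑l) (v : X)|) = 0 := fun j l =>
        Real.iSup_of_isEmpty _
      calc (⨆ j : Set.Ici n, ⨆ l : Set.Ici n, ⨆ v : (∅ : Set X), |(φ ↑j - φ ↑l) (v : X)|)
          = ⨆ _ : Set.Ici n, ⨆ _ : Set.Ici n, (0:ℝ) :=
            iSup_congr (fun j => iSup_congr (fun l => h1 j l))
        _ = 0 := by rw [ciSup_const, ciSup_const]
    rw [iInf_congr hz, ciInf_const]
  -- main estimate
  have main : ∀ ε : ℝ, 0 < ε → c ≤ 3*s + 4*ε := by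
    intro ε hε
    by_cases hce : c ≤ 4*ε
    · linarith
    push_neg at hce
    have hcpos : (0:ℝ) ≤ c - ε := by linarith
    -- choose almost-extremal pairs with witnesses in the ball
    have hpair : ∀ m : ℕ, ∃ j l z, m ≤ j ∧ m ≤ l ∧ ‖z‖ ≤ 1 ∧ c - ε < (φ j - φ l) z := by
      intro m
      have hdiam : c ≤ Metric.diam (φ '' Set.Ici m) := by
        rw [hcaeq]
        refine ciInf_le ⟨0, ?_⟩ m
        rintro _ ⟨n, rfl⟩
        exact Metric.diam_nonneg
      obtain ⟨ψ1, hψ1, ψ2, hψ2, hdist⟩ : ∃ p ∈ φ '' Set.Ici m, ∃ q ∈ φ '' Set.Ici m,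
          c - ε < dist p q := by
        by_contra hcon
        push_neg at hcon
        have := Metric.diam_le_of_forall_dist_le hcpos hcon
        linarith
      obtain ⟨j, hj, rfl⟩ := hψ1
      obtain ⟨l, hl, rfl⟩ := hψ2
      rw [dist_eq_norm] at hdist
      obtain ⟨z0, hz0, hz0gt⟩ := (φ j - φ l).exists_lt_apply_of_lt_opNorm hdist
      rcases le_or_gt 0 ((φ j - φ l) z0) with hsign | hsign
      · exact ⟨j, l, z0, hj, hl, le_of_lt hz0,
          by rwa [Real.norm_eq_abs, abs_of_nonneg hsign] at hz0gt⟩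
      · refine ⟨j, l, -z0, hj, hl, by rw [norm_neg]; exact le_of_lt hz0, ?_⟩
        rw [map_neg]
        rw [Real.norm_eq_abs, abs_of_neg hsign] at hz0gt
        linarith
    choose jf lf zf hjf hlf hzf hgtf using hpair
    -- Rosenthal: weakly Cauchy subsequence
    obtain ⟨σ, hσ, hσweak⟩ := rosenthal_weak_cauchy hX zf hzf
    set a : ℕ → X := fun p => zf (σ p) with ha
    -- singleton bounds
    have hsingle : ∀ p : ℕ, ∃ n₀ : ℕ, ∀ j l : ℕ, n₀ ≤ j → n₀ ≤ l →
        |(φ j - φ l) (a p)| ≤ s + ε := by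
      intro p
      have hmem : a p ∈ Metric.closedBall (0:X) 1 := by
        rw [Metric.mem_closedBall, dist_zero_right]; exact hzf _
      obtain ⟨n₀, hn₀⟩ := key {a p}
        (by intro y hy; rw [Set.mem_singleton_iff] at hy; rw [hy]; exact hmem)
        isCompact_singleton ε hε
      exact ⟨n₀, fun j l hj hl => hn₀ j l hj hl (a p) rfl⟩
    choose Nf hNf using hsingle
    -- the recursive index sequence
    set k : ℕ → ℕ := fun i => Nat.rec 0 (fun i prev => max (prev+1) (Nf prev)) i with hk
    have hksucc : ∀ i, k (i+1) = max (k i + 1) (Nf (k i)) := fun i => rfl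
    have hkmono : StrictMono k := strictMono_nat_of_lt_succ (fun i => by rw [hksucc]; omega)
    -- the weakly null sequence
    set w : ℕ → X := fun i => (2:ℝ)⁻¹ • (a (k (i+1)) - a (k i)) with hw
    have haball : ∀ p, ‖a p‖ ≤ 1 := fun p => hzf _
    have hwball : ∀ i, w i ∈ Metric.closedBall (0:X) 1 := by
      intro i
      rw [Metric.mem_closedBall, dist_zero_right, hw]
      dsimp only
      rw [norm_smul, norm_inv]
      have h1 : ‖a (k (i+1)) - a (k i)‖ ≤ 2 := by
        calc ‖a (k (i+1)) - a (k i)‖ ≤ ‖a (k (i+1))‖ + ‖a (k i)‖ := norm_sub_le _ _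
          _ ≤ 2 := by have := haball (k (i+1)); have := haball (k i); linarith
      have h2 : ‖(2:ℝ)‖ = 2 := by norm_num
      rw [h2]
      nlinarith [norm_nonneg (a (k (i+1)) - a (k i))]
    -- weak nullity
    have hinj : Function.Injective ((topDualPairing ℝ X).flip) := by
      intro x y hxy
      rw [NormedSpace.eq_iff_forall_dual_eq ℝ]
      intro g
      exact LinearMap.congr_fun hxy g
    have hwnull : Tendsto (show ℕ → WeakSpace ℝ X from w) atTop (𝓝 (0 : WeakSpace ℝ X)) := by
      refine (WeakBilin.tendsto_iff_forall_eval_tendsto _ hinj).2 ?_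
      intro f
      have h0 : (topDualPairing ℝ X).flip (0 : WeakSpace ℝ X) f = 0 := by show f 0 = 0; exact map_zero f
      rw [h0]
      have heval : ∀ i, (topDualPairing ℝ X).flip (w i) f
          = (2:ℝ)⁻¹ * (f (a (k (i+1))) - f (a (k i))) := by
        intro i
        show f (w i) = _
        rw [hw]
        dsimp only
        rw [map_smul, map_sub]
        simp [smul_eq_mul]
      simp only [heval]
      obtain ⟨L, hL⟩ := hσweak f
      have hL' : Tendsto (fun p => f (a p)) atTop (𝓝 L) := hL
      have t1 : Tendsto (fun i => f (a (k (i+1)))) atTop (𝓝 L) :=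
        hL'.comp (hkmono.tendsto_atTop.comp (tendsto_add_atTop_nat 1))
      have t2 : Tendsto (fun i => f (a (k i))) atTop (𝓝 L) :=
        hL'.comp hkmono.tendsto_atTop
      have := (t1.sub t2).const_mul ((2:ℝ)⁻¹)
      simpa using this
    set K : Set X := insert (0:X) (Set.range w) with hK
    have hKcpt : IsCompact (show Set (WeakSpace ℝ X) from K) := by
      have h := hwnull.isCompact_insert_range
      exact h
    have hKball : K ⊆ Metric.closedBall 0 1 := by
      rintro y hy
      rcases Set.mem_insert_iff.1 hy with rfl | ⟨i, rfl⟩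
      · rw [Metric.mem_closedBall, dist_self]; norm_num
      · exact hwball i
    obtain ⟨n₀, hn₀⟩ := key K hKball hKcpt ε hε
    -- apply everything at index n₀
    have hkge : ∀ i, i ≤ k i := fun i => hkmono.le_apply
    have hσge : ∀ p, p ≤ σ p := fun p => hσ.le_apply
    set j := jf (σ (k (n₀+1))) with hj
    set l := lf (σ (k (n₀+1))) with hl
    have hjge : σ (k (n₀+1)) ≤ j := hjf _
    have hlge : σ (k (n₀+1)) ≤ l := hlf _
    have hkn : n₀ + 1 ≤ k (n₀+1) := hkge _
    have hNle : Nf (k n₀) ≤ k (n₀+1) := by rw [hksucc]; omega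
    have hjn₀ : n₀ ≤ j := by have := hσge (k (n₀+1)); omega
    have hln₀ : n₀ ≤ l := by have := hσge (k (n₀+1)); omega
    have hbig : c - ε < (φ j - φ l) (a (k (n₀+1))) := hgtf (σ (k (n₀+1)))
    have hsmall : |(φ j - φ l) (a (k n₀))| ≤ s + ε := by
      refine hNf (k n₀) j l ?_ ?_
      · have := hσge (k (n₀+1)); omega
      · have := hσge (k (n₀+1)); omega
    have hKmem : w n₀ ∈ K := Set.mem_insert_of_mem _ ⟨n₀, rfl⟩
    have hup : |(φ j - φ l) (w n₀)| ≤ s + ε := hn₀ j l hjn₀ hln₀ _ hKmem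
    have hval : (φ j - φ l) (w n₀)
        = ((φ j - φ l) (a (k (n₀+1))) - (φ j - φ l) (a (k n₀))) / 2 := by
      rw [hw]
      dsimp only
      rw [map_smul, map_sub]
      simp [smul_eq_mul]
      ring
    have h1 : (c - ε - (s + ε))/2 ≤ (φ j - φ l) (w n₀) := by
      rw [hval]
      have := (abs_le.1 hsmall).2
      linarith
    have h2 : (φ j - φ l) (w n₀) ≤ s + ε := le_trans (le_abs_self _) hup
    linarith
  -- conclude
  have hfinal : c ≤ 3*s := by
    apply le_of_forall_pos_le_add
    intro δ hδ
    have := main (δ/4) (by linarith)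
    linarith
  linarith
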